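/- arXiv:2509.03371 — 5 statements merged into one kernel-verified Lean document; each statement's English description precedes it below -/
import Mathlib

section
/- In a locally cartesian closed category C, for arrows f : x → y and g : e → x, the dependent product Π_f g is the pullback in the slice category C/y of the exponential transpose map id_y → [f,f] along the map [f, f∘g] → [f,f] induced by post-composition with g, where [-,-] denotes the internal hom (exponential) in C/y. -/
open CategoryTheory Limits MonoidalCategory CartesianClosed

universe v u

namespace DepProdAux

open CategoryTheory CartesianMonoidalCategory MonoidalClosed

variable {C : Type u} [Category.{v} C] [HasFiniteLimits C]
    [∀ z : C, CartesianMonoidalCategory (Over z)] [∀ z : C, MonoidalClosed (Over z)]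
    {x y e : C} (f : x ⟶ y) (g : e ⟶ x)

/-- comparison map from the product carrier to the pullback -/
noncomputable def φ (A : Over y) :
    ((Over.mk f) ⊗ A).left ⟶ pullback A.hom f :=
  pullback.lift (snd (Over.mk f) A).left (fst (Over.mk f) A).left
    (by
      have h1 := Over.w (snd (Over.mk f) A)
      have h2 := Over.w (fst (Over.mk f) A)
      simp only [Over.mk_hom] at h1 h2 ⊢
      rw [h1, h2])

/-- the comparison map in the other direction, as an `Over` morphism -/
noncomputable def ψ (A : Over y) :
    Over.mk (pullback.fst A.hom f ≫ A.hom) ⟶ (Over.mk f) ⊗ A :=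
  lift (Over.homMk (pullback.snd A.hom f)
      (by simp [← pullback.condition]))
    (Over.homMk (pullback.fst A.hom f) rfl)

@[simp] lemma φ_fst (A : Over y) :
    φ f A ≫ pullback.fst A.hom f = (snd (Over.mk f) A).left := pullback.lift_fst _ _ _

@[simp] lemma φ_snd (A : Over y) :
    φ f A ≫ pullback.snd A.hom f = (fst (Over.mk f) A).left := pullback.lift_snd _ _ _

@[simp] lemma ψ_fst (A : Over y) :
    (ψ f A).left ≫ (fst (Over.mk f) A).left = pullback.snd A.hom f := by
  have h : (ψ f A ≫ fst (Over.mk f) A).left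
      = ((Over.homMk (pullback.snd A.hom f) (by simp [← pullback.condition]) :
          Over.mk (pullback.fst A.hom f ≫ A.hom) ⟶ Over.mk f)).left := by
    rw [ψ, lift_fst]
  rw [Over.comp_left] at h
  exact h

@[simp] lemma ψ_snd (A : Over y) :
    (ψ f A).left ≫ (snd (Over.mk f) A).left = pullback.fst A.hom f := by
  have h : (ψ f A ≫ snd (Over.mk f) A).left
      = ((Over.homMk (pullback.fst A.hom f) rfl :
          Over.mk (pullback.fst A.hom f ≫ A.hom) ⟶ A)).left := by
    rw [ψ, lift_snd]
  rw [Over.comp_left] at h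
  exact h

lemma ψ_φ (A : Over y) : (ψ f A).left ≫ φ f A = 𝟙 _ := by
  apply pullback.hom_ext <;> simp

lemma φ_ψ (A : Over y) : φ f A ≫ (ψ f A).left = 𝟙 _ := by
  have hw : (φ f A ≫ (ψ f A).left) ≫ ((Over.mk f) ⊗ A).hom = ((Over.mk f) ⊗ A).hom := by
    have hψ := Over.w (ψ f A)
    simp only [Over.mk_hom] at hψ
    rw [Category.assoc, hψ]
    have h1 := Over.w (snd (Over.mk f) A)
    rw [← Category.assoc, φ_fst, h1]
  have key : (Over.homMk (φ f A ≫ (ψ f A).left) hw : (Over.mk f) ⊗ A ⟶ (Over.mk f) ⊗ A)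
      = 𝟙 _ := by
    apply CartesianMonoidalCategory.hom_ext
    · ext
      simp
    · ext
      simp
  have := congrArg CommaMorphism.left key
  simpa using this

@[simp] lemma whiskerLeft_fst_left {A A' : Over y} (h : A' ⟶ A) :
    ((Over.mk f) ◁ h).left ≫ (fst (Over.mk f) A).left = (fst (Over.mk f) A').left := by
  have h' : (((Over.mk f) ◁ h) ≫ fst (Over.mk f) A).left = (fst (Over.mk f) A').left := by
    rw [whiskerLeft_fst]
  rw [Over.comp_left] at h'
  exact h' 

@[simp] lemma whiskerLeft_snd_left {A A' : Over y} (h : A' ⟶ A) :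
    ((Over.mk f) ◁ h).left ≫ (snd (Over.mk f) A).left
      = (snd (Over.mk f) A').left ≫ h.left := by
  have h' : (((Over.mk f) ◁ h) ≫ snd (Over.mk f) A).left
      = (snd (Over.mk f) A' ≫ h).left := by
    rw [whiskerLeft_snd]
  rw [Over.comp_left, Over.comp_left] at h'
  exact h' 

lemma φ_natural {A A' : Over y} (h : A' ⟶ A) :
    φ f A' ≫ ((Over.pullback f).map h).left = ((Over.mk f) ◁ h).left ≫ φ f A := by
  apply pullback.hom_ext
  · simp
    erw [pullback.lift_fst, ← Category.assoc, φ_fst]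
  · simp
    erw [pullback.lift_snd, φ_snd]

lemma toUnit_curry_fst (A : Over y) :
    (toUnit A ≫ MonoidalClosed.curry (fst (Over.mk f) (𝟙_ (Over y))) :
      A ⟶ (Over.mk f) ⟹ (Over.mk f)) =
    MonoidalClosed.curry (fst (Over.mk f) A) := by
  rw [← MonoidalClosed.curry_natural_left]
  congr 1
  simp

variable (Pf : Over x ⥤ Over y) (adj : Over.pullback f ⊣ Pf)

lemma s_w (A : Over y) (t : A ⟶ Pf.obj (Over.mk g)) :
    ((adj.homEquiv A (Over.mk g)).symm t).left ≫ g = pullback.snd A.hom f := by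
  have := Over.w ((adj.homEquiv A (Over.mk g)).symm t)
  simpa using this

/-- The uncurried map corresponding to a map into `Pf.obj (Over.mk g)`. -/
noncomputable def W (A : Over y) (t : A ⟶ Pf.obj (Over.mk g)) :
    (Over.mk f) ⊗ A ⟶ Over.mk (g ≫ f) :=
  Over.homMk (φ f A ≫ ((adj.homEquiv A (Over.mk g)).symm t).left)
    (by
      have h2 := Over.w (fst (Over.mk f) A)
      simp only [Over.mk_hom] at h2 ⊢
      rw [Category.assoc, ← Category.assoc _ g f, s_w f g Pf adj A t,
        ← Category.assoc, φ_snd, h2])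

lemma W_comp (A : Over y) (t : A ⟶ Pf.obj (Over.mk g)) :
    W f g Pf adj A t ≫ (Over.homMk g : Over.mk (g ≫ f) ⟶ Over.mk f)
      = fst (Over.mk f) A := by
  ext
  simp only [W, Over.comp_left, Over.homMk_left, Category.assoc]
  rw [s_w f g Pf adj A t, φ_snd]

lemma p_comm (A : Over y) (t : A ⟶ Pf.obj (Over.mk g)) :
    toUnit A ≫ MonoidalClosed.curry (fst (Over.mk f) (𝟙_ (Over y)))
      = MonoidalClosed.curry (W f g Pf adj A t)
        ≫ (ihom (Over.mk f)).map (Over.homMk g : Over.mk (g ≫ f) ⟶ Over.mk f) := by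
  rw [toUnit_curry_fst, ← MonoidalClosed.curry_natural_right, W_comp]

/-- The forward map of the comparison. -/
noncomputable def p (A : Over y) (t : A ⟶ Pf.obj (Over.mk g)) :
    A ⟶ pullback
      (MonoidalClosed.curry (fst (Over.mk f) (𝟙_ (Over y))) :
        𝟙_ (Over y) ⟶ (Over.mk f) ⟹ (Over.mk f))
      ((ihom (Over.mk f)).map (Over.homMk g : Over.mk (g ≫ f) ⟶ Over.mk f)) :=
  pullback.lift (toUnit A) (MonoidalClosed.curry (W f g Pf adj A t))
    (p_comm f g Pf adj A t)

variable {f g}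

/-- the uncurried map associated with a map into the pullback -/
noncomputable def u (A : Over y)
    (r : A ⟶ pullback
      (MonoidalClosed.curry (fst (Over.mk f) (𝟙_ (Over y))) :
        𝟙_ (Over y) ⟶ (Over.mk f) ⟹ (Over.mk f))
      ((ihom (Over.mk f)).map (Over.homMk g : Over.mk (g ≫ f) ⟶ Over.mk f))) :
    (Over.mk f) ⊗ A ⟶ Over.mk (g ≫ f) :=
  MonoidalClosed.uncurry (r ≫ pullback.snd _ _)

lemma u_comp (A : Over y)
    (r : A ⟶ pullback
      (MonoidalClosed.curry (fst (Over.mk f) (𝟙_ (Over y))) :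
        𝟙_ (Over y) ⟶ (Over.mk f) ⟹ (Over.mk f))
      ((ihom (Over.mk f)).map (Over.homMk g : Over.mk (g ≫ f) ⟶ Over.mk f))) :
    u A r ≫ (Over.homMk g : Over.mk (g ≫ f) ⟶ Over.mk f) = fst (Over.mk f) A := by
  have h1 : (r ≫ pullback.snd _ _) ≫
      (ihom (Over.mk f)).map (Over.homMk g : Over.mk (g ≫ f) ⟶ Over.mk f)
      = MonoidalClosed.curry (fst (Over.mk f) A) := by
    rw [Category.assoc, ← pullback.condition, ← Category.assoc,
      toUnit_unique (r ≫ pullback.fst _ _) (toUnit A), toUnit_curry_fst]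
  have := congrArg MonoidalClosed.uncurry h1
  rwa [MonoidalClosed.uncurry_natural_right, MonoidalClosed.uncurry_curry] at this

lemma u_left (A : Over y)
    (r : A ⟶ pullback
      (MonoidalClosed.curry (fst (Over.mk f) (𝟙_ (Over y))) :
        𝟙_ (Over y) ⟶ (Over.mk f) ⟹ (Over.mk f))
      ((ihom (Over.mk f)).map (Over.homMk g : Over.mk (g ≫ f) ⟶ Over.mk f))) :
    (u A r).left ≫ g = (fst (Over.mk f) A).left := by
  have := congrArg CommaMorphism.left (u_comp A r)
  simpa using this

variable (f g)

/-- the map out of the pullback functor's value associated with a map into the pullback -/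
noncomputable def S (A : Over y)
    (r : A ⟶ pullback
      (MonoidalClosed.curry (fst (Over.mk f) (𝟙_ (Over y))) :
        𝟙_ (Over y) ⟶ (Over.mk f) ⟹ (Over.mk f))
      ((ihom (Over.mk f)).map (Over.homMk g : Over.mk (g ≫ f) ⟶ Over.mk f))) :
    (Over.pullback f).obj A ⟶ Over.mk g :=
  Over.homMk ((ψ f A).left ≫ (u A r).left)
    (by
      simp only [Over.pullback_obj_hom, Over.mk_hom, Category.assoc]
      rw [u_left A r, ψ_fst])

/-- The backward map of the comparison. -/
noncomputable def q (A : Over y)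
    (r : A ⟶ pullback
      (MonoidalClosed.curry (fst (Over.mk f) (𝟙_ (Over y))) :
        𝟙_ (Over y) ⟶ (Over.mk f) ⟹ (Over.mk f))
      ((ihom (Over.mk f)).map (Over.homMk g : Over.mk (g ≫ f) ⟶ Over.mk f))) :
    A ⟶ Pf.obj (Over.mk g) :=
  adj.homEquiv A (Over.mk g) (S f g A r)

lemma q_p (A : Over y) (t : A ⟶ Pf.obj (Over.mk g)) :
    q f g Pf adj A (p f g Pf adj A t) = t := by
  have hu : u A (p f g Pf adj A t) = W f g Pf adj A t := by
    rw [u, p, pullback.lift_snd, MonoidalClosed.uncurry_curry]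
  have hS : S f g A (p f g Pf adj A t) = (adj.homEquiv A (Over.mk g)).symm t := by
    ext
    simp only [S, Over.homMk_left, hu, W]
    rw [← Category.assoc, ψ_φ]
    simp
  rw [q, hS, Equiv.apply_symm_apply]

lemma p_q (A : Over y)
    (r : A ⟶ pullback
      (MonoidalClosed.curry (fst (Over.mk f) (𝟙_ (Over y))) :
        𝟙_ (Over y) ⟶ (Over.mk f) ⟹ (Over.mk f))
      ((ihom (Over.mk f)).map (Over.homMk g : Over.mk (g ≫ f) ⟶ Over.mk f))) :
    p f g Pf adj A (q f g Pf adj A r) = r := by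
  have hs : (adj.homEquiv A (Over.mk g)).symm (q f g Pf adj A r) = S f g A r :=
    Equiv.symm_apply_apply _ _
  have hW : W f g Pf adj A (q f g Pf adj A r) = u A r := by
    ext
    simp only [W, Over.homMk_left, hs, S]
    rw [← Category.assoc, φ_ψ]
    simp
  apply pullback.hom_ext
  · exact toUnit_unique _ _
  · rw [p, pullback.lift_snd, hW, u, MonoidalClosed.curry_uncurry]

lemma p_natural {A A' : Over y} (h : A' ⟶ A) (t : A ⟶ Pf.obj (Over.mk g)) :
    p f g Pf adj A' (h ≫ t) = h ≫ p f g Pf adj A t := by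
  have hW : W f g Pf adj A' (h ≫ t) = ((Over.mk f) ◁ h) ≫ W f g Pf adj A t := by
    ext
    simp only [W, Over.homMk_left, Over.comp_left]
    rw [Adjunction.homEquiv_naturality_left_symm]
    simp only [Over.comp_left]
    rw [← Category.assoc, φ_natural, Category.assoc]
  apply pullback.hom_ext
  · exact toUnit_unique _ _
  · rw [p, pullback.lift_snd, hW, MonoidalClosed.curry_natural_left]
    simp [p]
    erw [pullback.lift_snd]

end DepProdAux

/-- In a locally cartesian closed category `C` (every slice cartesian
closed, pullback functors with right adjoints `Π_f`), for `f : x ⟶ y` and `g : e ⟶ x`,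
the dependent product `Π_f g` is the pullback, in the slice `C/y`, of the map
`[f, f ∘ g] ⟶ [f, f]` (post-composition with `g`) along the exponential transpose
`id_y ⟶ [f, f]` of the identity on `f`. -/
theorem dependent_product_as_pullback_of_exponentials
    {C : Type u} [Category.{v} C] [HasFiniteLimits C]
    [∀ z : C, CartesianMonoidalCategory (Over z)] [∀ z : C, MonoidalClosed (Over z)]
    {x y e : C} (f : x ⟶ y) (g : e ⟶ x)
    (Pf : Over x ⥤ Over y) (adj : Over.pullback f ⊣ Pf) :
    Nonempty (Pf.obj (Over.mk g) ≅
      pullback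
        (MonoidalClosed.curry (CartesianMonoidalCategory.fst (Over.mk f) (𝟙_ (Over y))) :
          𝟙_ (Over y) ⟶ (Over.mk f) ⟹ (Over.mk f))
        ((ihom (Over.mk f)).map
          (Over.homMk g : Over.mk (g ≫ f) ⟶ Over.mk f))) :=
  ⟨Yoneda.ext _ _
    (fun {A} t => DepProdAux.p f g Pf adj A t)
    (fun {A} r => DepProdAux.q f g Pf adj A r)
    (fun {A} t => DepProdAux.q_p f g Pf adj A t)
    (fun {A} r => DepProdAux.p_q f g Pf adj A r)
    (fun {A' A} h t => DepProdAux.p_natural f g Pf adj h t)⟩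
end

section
/- In a tribe, if u : X → Y is an anodyne map, then u is a strong deformation retract: there exists r : Y → X with r ∘ u = id_X and a homotopy H : Y → PY (valued in a path object for Y) from u ∘ r to id_Y which is constant on X, i.e. H ∘ u = ι_Y ∘ u where ι_Y : Y → PY is the reflexivity map. -/
set_option autoImplicit false

open CategoryTheory Limits

universe v u

namespace TribePaper

variable {C : Type u} [Category.{v} C]

/-- Anodyne maps relative to a class of fibrations: the maps with the left lifting
property against all fibrations. -/
def Anodyne (fib : MorphismProperty C) : MorphismProperty C :=
  fun _ _ i => ∀ {a b : C} (p : a ⟶ b), fib p → HasLiftingProperty i p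

/-- A tribe structure (Joyal): a class of fibrations, stable under composition,
containing the isomorphisms, with a terminal object to which every map is a fibration,
pullbacks along fibrations (with fibrations stable under base change), factorizations
as anodyne followed by fibration, and anodyne maps stable under base change along
fibrations. -/
structure TribeStruct (C : Type u) [Category.{v} C] where
  fib : MorphismProperty C
  fib_comp : ∀ {x y z : C} (f : x ⟶ y) (g : y ⟶ z), fib f → fib g → fib (f ≫ g)
  fib_iso : ∀ {x y : C} (f : x ⟶ y), IsIso f → fib f
  term : C
  isTerm : IsTerminal term
  fib_term : ∀ x : C, fib (isTerm.from x)
  pb_exists : ∀ {x y z : C} (f : x ⟶ z) (g : y ⟶ z), fib g →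
    ∃ (w : C) (p₁ : w ⟶ x) (p₂ : w ⟶ y) (h : IsPullback p₁ p₂ f g), fib p₁
  fib_base_change : ∀ {w x y z : C} (p₁ : w ⟶ x) (p₂ : w ⟶ y) (f : x ⟶ z) (g : y ⟶ z),
    IsPullback p₁ p₂ f g → fib g → fib p₁
  fact : ∀ {x y : C} (f : x ⟶ y),
    ∃ (z : C) (i : x ⟶ z) (p : z ⟶ y), Anodyne fib i ∧ fib p ∧ i ≫ p = f
  anodyne_base_change : ∀ {w x y z : C} (p₁ : w ⟶ x) (p₂ : w ⟶ y) (f : x ⟶ z) (g : y ⟶ z),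
    IsPullback p₁ p₂ f g → fib g → Anodyne fib f → Anodyne fib p₂


/-- In a tribe, every anodyne map `u : X ⟶ Y` is a strong deformation
retract: given a binary product `Y × Y` (a pullback over the terminal object) and a path
object `Y → PY → Y × Y` (reflexivity `ι` anodyne, projection `π` a fibration, factoring
the diagonal), there are `r : Y ⟶ X` with `u ≫ r = 𝟙 X` and a homotopy `H : Y ⟶ PY`
from `u ∘ r` to `𝟙 Y` which is constant on `X`, i.e. `u ≫ H = u ≫ ι`. -/
theorem anodyne_is_strong_deformation_retract (T : TribeStruct C)
    {X Y : C} (u : X ⟶ Y) (hu : Anodyne T.fib u)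
    -- a binary product `Y × Y`
    (prodY : C) (pr₁ pr₂ : prodY ⟶ Y)
    (hprod : IsPullback pr₁ pr₂ (T.isTerm.from Y) (T.isTerm.from Y))
    -- a path object for `Y`
    (PY : C) (ι : Y ⟶ PY) (π : PY ⟶ prodY)
    (hι : Anodyne T.fib ι) (hπ : T.fib π)
    (hfact : ι ≫ π = hprod.lift (𝟙 Y) (𝟙 Y) (by simp)) :
    ∃ r : Y ⟶ X, u ≫ r = 𝟙 X ∧
      ∃ H : Y ⟶ PY,
        H ≫ π = hprod.lift (r ≫ u) (𝟙 Y) (by simp) ∧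
        u ≫ H = u ≫ ι := by
  have h1 : HasLiftingProperty u (T.isTerm.from X) := hu _ (T.fib_term X)
  have sq1 : CommSq (𝟙 X) u (T.isTerm.from X) (T.isTerm.from Y) := ⟨T.isTerm.hom_ext _ _⟩
  obtain ⟨⟨l1⟩⟩ := h1.sq_hasLift sq1
  refine ⟨l1.l, l1.fac_left, ?_⟩
  have h2 : HasLiftingProperty u π := hu π hπ
  have sq2 : CommSq (u ≫ ι) u π (hprod.lift (l1.l ≫ u) (𝟙 Y) (by simp)) := by
    constructor
    apply hprod.hom_ext
    · simp [hfact, reassoc_of% l1.fac_left]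
    · simp [hfact]
  obtain ⟨⟨l2⟩⟩ := h2.sq_hasLift sq2
  exact ⟨l2.l, l2.fac_right, l2.fac_left⟩

end TribePaper
end

section
/- Let F be a fibration category. For any two objects x and y, x and y are connected by a zig-zag of weak equivalences if and only if they are connected by a zig-zag of length two x ← z → y in which both legs are weak equivalences. -/
set_option autoImplicit false

open CategoryTheory Limits

universe v u

namespace FibCatPaper

variable {C : Type u} [Category.{v} C]

/-- A fibration category structure: fibrations and weak equivalences, both closed under
composition, a terminal object with all objects fibrant, pullbacks along fibrations with
fibrations and trivial fibrations stable under base change, 2-out-of-3 for weak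
equivalences, and factorizations of diagonals through path objects. -/
structure FibrationCategoryStruct (C : Type u) [Category.{v} C] where
  weq : MorphismProperty C
  fib : MorphismProperty C
  weq_comp : ∀ {x y z : C} (f : x ⟶ y) (g : y ⟶ z), weq f → weq g → weq (f ≫ g)
  fib_comp : ∀ {x y z : C} (f : x ⟶ y) (g : y ⟶ z), fib f → fib g → fib (f ≫ g)
  weq_id : ∀ x : C, weq (𝟙 x)
  term : C
  isTerm : IsTerminal term
  fib_term : ∀ x : C, fib (isTerm.from x)
  pb_exists : ∀ {x y z : C} (f : x ⟶ z) (g : y ⟶ z), fib g →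
    ∃ (w : C) (p₁ : w ⟶ x) (p₂ : w ⟶ y), IsPullback p₁ p₂ f g
  fib_base_change : ∀ {w x y z : C} (p₁ : w ⟶ x) (p₂ : w ⟶ y) (f : x ⟶ z) (g : y ⟶ z),
    IsPullback p₁ p₂ f g → fib g → fib p₁
  trivFib_base_change : ∀ {w x y z : C} (p₁ : w ⟶ x) (p₂ : w ⟶ y) (f : x ⟶ z) (g : y ⟶ z),
    IsPullback p₁ p₂ f g → fib g → weq g → fib p₁ ∧ weq p₁
  two_out_of_three₁ : ∀ {x y z : C} (f : x ⟶ y) (g : y ⟶ z), weq f → weq (f ≫ g) → weq g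
  two_out_of_three₂ : ∀ {x y z : C} (f : x ⟶ y) (g : y ⟶ z), weq g → weq (f ≫ g) → weq f
  path_obj : ∀ x : C,
    ∃ (prodx : C) (pr₁ pr₂ : prodx ⟶ x)
      (hprod : IsPullback pr₁ pr₂ (isTerm.from x) (isTerm.from x))
      (px : C) (w : x ⟶ px) (q : px ⟶ prodx),
      weq w ∧ fib q ∧ w ≫ q = hprod.lift (𝟙 x) (𝟙 x) (by simp)

/-- Two objects are connected by a zig-zag of weak equivalences: the equivalence
closure of the relation "there is a weak equivalence from `x` to `y`". -/
def ZigzagWeq (T : FibrationCategoryStruct C) : C → C → Prop :=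
  Relation.EqvGen (fun x y => ∃ f : x ⟶ y, T.weq f)

/-- Brown's factorization lemma: any map `f : a ⟶ b` factors as a weak equivalence
`i : a ⟶ E` followed by a fibration `eb : E ⟶ b`, where moreover `E` comes with a weak
equivalence `ea : E ⟶ a` back to `a`. -/
lemma brown_factor (T : FibrationCategoryStruct C) {a b : C} (f : a ⟶ b) :
    ∃ (E : C) (ea : E ⟶ a) (eb : E ⟶ b),
      T.weq ea ∧ T.fib eb ∧ ∃ i : a ⟶ E, T.weq i ∧ i ≫ eb = f := by
  obtain ⟨prodb, pr₁, pr₂, hprod, Pb, w, q, hw, hq, hwq⟩ := T.path_obj b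
  obtain ⟨P, ra, rb, hP⟩ := T.pb_exists (T.isTerm.from a) (T.isTerm.from b) (T.fib_term b)
  have hpr₁ : T.fib pr₁ := T.fib_base_change _ _ _ _ hprod (T.fib_term b)
  have hrb : T.fib rb := T.fib_base_change _ _ _ _ hP.flip (T.fib_term a)
  -- the "graph" map `k : a × b ⟶ b × b`
  obtain ⟨k, hk₁, hk₂⟩ : ∃ k : P ⟶ prodb, k ≫ pr₁ = ra ≫ f ∧ k ≫ pr₂ = rb :=
    ⟨hprod.lift (ra ≫ f) rb (T.isTerm.hom_ext _ _), hprod.lift_fst _ _ _, hprod.lift_snd _ _ _⟩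
  obtain ⟨E, m, e₂, hE⟩ := T.pb_exists k q hq
  have hm : T.fib m := T.fib_base_change _ _ _ _ hE hq
  have hwq₁ : w ≫ q ≫ pr₁ = 𝟙 b := by
    rw [← Category.assoc, hwq, hprod.lift_fst]
  have hwq₂ : w ≫ q ≫ pr₂ = 𝟙 b := by
    rw [← Category.assoc, hwq, hprod.lift_snd]
  -- `q ≫ pr₁` is a trivial fibration
  have hq₁fib : T.fib (q ≫ pr₁) := T.fib_comp _ _ hq hpr₁
  have hq₁weq : T.weq (q ≫ pr₁) := T.two_out_of_three₁ w _ hw (by rw [hwq₁]; exact T.weq_id b)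
  -- the square `(m ≫ ra, e₂, f, q ≫ pr₁)` is a pullback
  have comm : (m ≫ ra) ≫ f = e₂ ≫ (q ≫ pr₁) := by
    calc (m ≫ ra) ≫ f = m ≫ k ≫ pr₁ := by rw [Category.assoc, hk₁]
    _ = (m ≫ k) ≫ pr₁ := (Category.assoc _ _ _).symm
    _ = (e₂ ≫ q) ≫ pr₁ := by rw [hE.w]
    _ = e₂ ≫ q ≫ pr₁ := Category.assoc _ _ _
  have pf : ∀ s : PullbackCone f (q ≫ pr₁),
      hP.lift s.fst (s.snd ≫ q ≫ pr₂) (T.isTerm.hom_ext _ _) ≫ k = s.snd ≫ q := by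
    intro s
    apply hprod.hom_ext
    · calc (hP.lift s.fst (s.snd ≫ q ≫ pr₂) (T.isTerm.hom_ext _ _) ≫ k) ≫ pr₁
          = hP.lift s.fst (s.snd ≫ q ≫ pr₂) (T.isTerm.hom_ext _ _) ≫ (k ≫ pr₁) :=
            Category.assoc _ _ _
      _ = hP.lift s.fst (s.snd ≫ q ≫ pr₂) (T.isTerm.hom_ext _ _) ≫ (ra ≫ f) := by
            rw [hk₁]
      _ = (hP.lift s.fst (s.snd ≫ q ≫ pr₂) (T.isTerm.hom_ext _ _) ≫ ra) ≫ f :=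
            (Category.assoc _ _ _).symm
      _ = s.fst ≫ f := by rw [hP.lift_fst]
      _ = s.snd ≫ (q ≫ pr₁) := s.condition
      _ = (s.snd ≫ q) ≫ pr₁ := (Category.assoc _ _ _).symm
    · calc (hP.lift s.fst (s.snd ≫ q ≫ pr₂) (T.isTerm.hom_ext _ _) ≫ k) ≫ pr₂
          = hP.lift s.fst (s.snd ≫ q ≫ pr₂) (T.isTerm.hom_ext _ _) ≫ (k ≫ pr₂) :=
            Category.assoc _ _ _
      _ = s.snd ≫ q ≫ pr₂ := by rw [hk₂, hP.lift_snd]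
      _ = (s.snd ≫ q) ≫ pr₂ := (Category.assoc _ _ _).symm
  have hEa : IsPullback (m ≫ ra) e₂ f (q ≫ pr₁) := by
    refine IsPullback.of_isLimit (PullbackCone.IsLimit.mk comm
      (fun s => hE.lift (hP.lift s.fst (s.snd ≫ q ≫ pr₂) (T.isTerm.hom_ext _ _)) s.snd (pf s))
      (fun s => ?_) (fun s => hE.lift_snd _ _ _) (fun s m' h₁ h₂ => ?_))
    · rw [← Category.assoc, hE.lift_fst, hP.lift_fst]
    · apply hE.hom_ext
      · rw [hE.lift_fst]
        apply hP.hom_ext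
        · rw [hP.lift_fst, Category.assoc]; exact h₁
        · calc (m' ≫ m) ≫ rb = m' ≫ (m ≫ k) ≫ pr₂ := by
                rw [← hk₂, Category.assoc, Category.assoc]
          _ = (m' ≫ e₂) ≫ q ≫ pr₂ := by rw [hE.w, Category.assoc, Category.assoc]
          _ = s.snd ≫ q ≫ pr₂ := by rw [h₂]
          _ = hP.lift s.fst (s.snd ≫ q ≫ pr₂) (T.isTerm.hom_ext _ _) ≫ rb := by
                rw [hP.lift_snd]
      · rw [hE.lift_snd, h₂]
  have hea : T.weq (m ≫ ra) := (T.trivFib_base_change _ _ _ _ hEa hq₁fib hq₁weq).2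
  -- the section `i : a ⟶ E`
  obtain ⟨s, hs₁, hs₂⟩ : ∃ s : a ⟶ P, s ≫ ra = 𝟙 a ∧ s ≫ rb = f :=
    ⟨hP.lift (𝟙 a) f (T.isTerm.hom_ext _ _), hP.lift_fst _ _ _, hP.lift_snd _ _ _⟩
  have hsk : s ≫ k = (f ≫ w) ≫ q := by
    apply hprod.hom_ext
    · calc (s ≫ k) ≫ pr₁ = (s ≫ ra) ≫ f := by rw [Category.assoc, hk₁, ← Category.assoc]
      _ = f := by rw [hs₁, Category.id_comp]
      _ = ((f ≫ w) ≫ q) ≫ pr₁ := by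
            rw [Category.assoc, Category.assoc, hwq₁, Category.comp_id]
    · calc (s ≫ k) ≫ pr₂ = s ≫ rb := by rw [Category.assoc, hk₂]
      _ = f := hs₂
      _ = ((f ≫ w) ≫ q) ≫ pr₂ := by
            rw [Category.assoc, Category.assoc, hwq₂, Category.comp_id]
  obtain ⟨i, hi₁, hi₂⟩ : ∃ i : a ⟶ E, i ≫ m = s ∧ i ≫ e₂ = f ≫ w :=
    ⟨hE.lift s (f ≫ w) hsk, hE.lift_fst _ _ _, hE.lift_snd _ _ _⟩
  have hiea : i ≫ (m ≫ ra) = 𝟙 a := by rw [← Category.assoc, hi₁, hs₁]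
  have hiweq : T.weq i := T.two_out_of_three₂ i (m ≫ ra) hea (by rw [hiea]; exact T.weq_id a)
  refine ⟨E, m ≫ ra, m ≫ rb, hea, T.fib_comp _ _ hm hrb, i, hiweq, ?_⟩
  rw [← Category.assoc, hi₁, hs₂]

/-- Composition of spans of weak equivalences. -/
lemma span_trans (T : FibrationCategoryStruct C) {x y u : C}
    (h₁ : ∃ (z : C) (f : z ⟶ x) (g : z ⟶ y), T.weq f ∧ T.weq g)
    (h₂ : ∃ (z : C) (f : z ⟶ y) (g : z ⟶ u), T.weq f ∧ T.weq g) :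
    ∃ (z : C) (f : z ⟶ x) (g : z ⟶ u), T.weq f ∧ T.weq g := by
  obtain ⟨z, f, g, hf, hg⟩ := h₁
  obtain ⟨w, f', g', hf', hg'⟩ := h₂
  -- factor `f' : w ⟶ y` as weq followed by fibration
  obtain ⟨E, ea, eb, hea, hebfib, i, hi, hieb⟩ := brown_factor T f'
  have hebweq : T.weq eb := T.two_out_of_three₁ i eb hi (by rw [hieb]; exact hf')
  -- pull back the trivial fibration `eb` along `g : z ⟶ y`
  obtain ⟨V, p₁, p₂, hV⟩ := T.pb_exists g eb hebfib
  have hp₁ : T.weq p₁ := (T.trivFib_base_change _ _ _ _ hV hebfib hebweq).2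
  have hp₂ : T.weq p₂ := by
    refine T.two_out_of_three₂ p₂ eb hebweq ?_
    rw [← hV.w]
    exact T.weq_comp _ _ hp₁ hg
  exact ⟨V, p₁ ≫ f, (p₂ ≫ ea) ≫ g', T.weq_comp _ _ hp₁ hf,
    T.weq_comp _ _ (T.weq_comp _ _ hp₂ hea) hg'⟩

/-- In a fibration category, two objects are connected by a zig-zag of
weak equivalences iff they are connected by a single span `x ⟵ z ⟶ y` of weak
equivalences. -/
theorem zigzag_iff_span (T : FibrationCategoryStruct C) (x y : C) :
    ZigzagWeq T x y ↔
      ∃ (z : C) (f : z ⟶ x) (g : z ⟶ y), T.weq f ∧ T.weq g := by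
  constructor
  · intro h
    induction h with
    | rel a b hab => obtain ⟨f, hf⟩ := hab; exact ⟨a, 𝟙 a, f, T.weq_id a, hf⟩
    | refl a => exact ⟨a, 𝟙 a, 𝟙 a, T.weq_id a, T.weq_id a⟩
    | symm a b _ ih => obtain ⟨z, f, g, hf, hg⟩ := ih; exact ⟨z, g, f, hg, hf⟩
    | trans a b c _ _ ih₁ ih₂ => exact span_trans T ih₁ ih₂
  · rintro ⟨z, f, g, hf, hg⟩
    exact Relation.EqvGen.trans _ _ _
      (Relation.EqvGen.symm _ _ (Relation.EqvGen.rel _ _ ⟨f, hf⟩))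
      (Relation.EqvGen.rel _ _ ⟨g, hg⟩)

end FibCatPaper
end

section
/- Let T be a tribe and T^(1) the full subcategory of the arrow category of T spanned by the fibrations, equipped with Reedy fibrations (squares whose gap map to the pullback is a fibration) as fibrations. Then T^(1) is a tribe, and its anodyne maps are exactly the pointwise anodyne morphisms of arrows. -/
set_option autoImplicit false

open CategoryTheory Limits

universe v u

namespace TribePaper

variable {C : Type u} [Category.{v} C]

/-- The category `T⁽¹⁾` of fibrations in `C`: the full subcategory of the arrow
category spanned by the fibrations. -/
def FibArrow (T : TribeStruct C) := ObjectProperty.FullSubcategory (fun a : Arrow C => T.fib a.hom)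

instance (T : TribeStruct C) : Category (FibArrow T) :=
  ObjectProperty.FullSubcategory.category _

/-- The left (top) component of a morphism of arrows. -/
def FibArrow.leftOf {T : TribeStruct C} {X Y : FibArrow T} (φ : X ⟶ Y) :
    X.obj.left ⟶ Y.obj.left := CommaMorphism.left φ.hom

/-- The right (bottom) component of a morphism of arrows. -/
def FibArrow.rightOf {T : TribeStruct C} {X Y : FibArrow T} (φ : X ⟶ Y) :
    X.obj.right ⟶ Y.obj.right := CommaMorphism.right φ.hom

/-- Reedy fibrations in `T⁽¹⁾`: the bottom component is a fibration and, for any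
pullback of the bottom cospan, the gap map is a fibration. -/
def ReedyFib (T : TribeStruct C) : MorphismProperty (FibArrow T) :=
  fun X Y φ =>
    T.fib (FibArrow.rightOf φ) ∧
    ∀ (w : C) (k₁ : w ⟶ X.obj.right) (k₂ : w ⟶ Y.obj.left)
      (h : IsPullback k₁ k₂ (FibArrow.rightOf φ) Y.obj.hom),
      T.fib (h.lift X.obj.hom (FibArrow.leftOf φ)
        (by exact (CommaMorphism.w φ.hom).symm))

section Aux

variable {T : TribeStruct C}

open FibArrow

/-- Pullback of an iso is an iso (second leg when `f` is iso). -/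
lemma isIso_snd_of_pb {w x y z : C} {k₁ : w ⟶ x} {k₂ : w ⟶ y} {f : x ⟶ z} {g : y ⟶ z}
    (h : IsPullback k₁ k₂ f g) (hf : IsIso f) : IsIso k₂ := by
  refine ⟨h.lift (g ≫ inv f) (𝟙 y) (by simp), ?_, by simp⟩
  apply h.hom_ext
  · simp only [Category.assoc, IsPullback.lift_fst, Category.id_comp]
    rw [← Category.assoc, ← h.w, Category.assoc, IsIso.hom_inv_id, Category.comp_id]
  · simp

@[simp] lemma leftOf_comp {X Y Z : FibArrow T} (φ : X ⟶ Y) (ψ : Y ⟶ Z) :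
    leftOf (φ ≫ ψ) = leftOf φ ≫ leftOf ψ := rfl

@[simp] lemma rightOf_comp {X Y Z : FibArrow T} (φ : X ⟶ Y) (ψ : Y ⟶ Z) :
    rightOf (φ ≫ ψ) = rightOf φ ≫ rightOf ψ := rfl

@[simp] lemma leftOf_id (X : FibArrow T) : leftOf (𝟙 X) = 𝟙 X.obj.left := rfl

@[simp] lemma rightOf_id (X : FibArrow T) : rightOf (𝟙 X) = 𝟙 X.obj.right := rfl

lemma FibArrow.hom_ext' {X Y : FibArrow T} {φ ψ : X ⟶ Y}
    (h₁ : leftOf φ = leftOf ψ) (h₂ : rightOf φ = rightOf ψ) : φ = ψ :=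
  ObjectProperty.hom_ext _ (CommaMorphism.ext h₁ h₂)

lemma comm {X Y : FibArrow T} (φ : X ⟶ Y) :
    leftOf φ ≫ Y.obj.hom = X.obj.hom ≫ rightOf φ := by exact CommaMorphism.w φ.hom

def homMk {X Y : FibArrow T} (l : X.obj.left ⟶ Y.obj.left) (r : X.obj.right ⟶ Y.obj.right)
    (w : l ≫ Y.obj.hom = X.obj.hom ≫ r) : X ⟶ Y :=
  ObjectProperty.homMk (⟨l, r, by exact w⟩ : X.obj ⟶ Y.obj)

@[simp] lemma leftOf_homMk {X Y : FibArrow T} (l : X.obj.left ⟶ Y.obj.left)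
    (r : X.obj.right ⟶ Y.obj.right) (w : l ≫ Y.obj.hom = X.obj.hom ≫ r) :
    leftOf (homMk l r w) = l := rfl

@[simp] lemma rightOf_homMk {X Y : FibArrow T} (l : X.obj.left ⟶ Y.obj.left)
    (r : X.obj.right ⟶ Y.obj.right) (w : l ≫ Y.obj.hom = X.obj.hom ≫ r) :
    rightOf (homMk l r w) = r := rfl

lemma isIso_leftOf {X Y : FibArrow T} (φ : X ⟶ Y) [IsIso φ] : IsIso (leftOf φ) :=
  ⟨leftOf (inv φ), by rw [← leftOf_comp, IsIso.hom_inv_id]; rfl,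
    by rw [← leftOf_comp, IsIso.inv_hom_id]; rfl⟩

lemma isIso_rightOf {X Y : FibArrow T} (φ : X ⟶ Y) [IsIso φ] : IsIso (rightOf φ) :=
  ⟨rightOf (inv φ), by rw [← rightOf_comp, IsIso.hom_inv_id]; rfl,
    by rw [← rightOf_comp, IsIso.inv_hom_id]; rfl⟩

lemma pb_iso_comp {P P' x y z : C} {fst : P ⟶ x} {snd : P ⟶ y} {f : x ⟶ z} {g : y ⟶ z}
    (h : IsPullback fst snd f g) (e : P' ⟶ P) [IsIso e] :
    IsPullback (e ≫ fst) (e ≫ snd) f g := by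
  have s : IsPullback e (e ≫ snd) snd (𝟙 y) := IsPullback.of_horiz_isIso ⟨by simp⟩
  simpa using s.paste_horiz h

/-- The gap map of a square of fibrations relative to a chosen pullback. -/
noncomputable def gapOf {X Y : FibArrow T} (φ : X ⟶ Y) {w : C} {k₁ : w ⟶ X.obj.right}
    {k₂ : w ⟶ Y.obj.left} (h : IsPullback k₁ k₂ (rightOf φ) Y.obj.hom) :
    X.obj.left ⟶ w :=
  h.lift X.obj.hom (leftOf φ) (by exact (CommaMorphism.w φ.hom).symm)

@[simp] lemma gapOf_fst {X Y : FibArrow T} (φ : X ⟶ Y) {w : C} {k₁ : w ⟶ X.obj.right}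
    {k₂ : w ⟶ Y.obj.left} (h : IsPullback k₁ k₂ (rightOf φ) Y.obj.hom) :
    gapOf φ h ≫ k₁ = X.obj.hom := IsPullback.lift_fst _ _ _ _

@[simp] lemma gapOf_snd {X Y : FibArrow T} (φ : X ⟶ Y) {w : C} {k₁ : w ⟶ X.obj.right}
    {k₂ : w ⟶ Y.obj.left} (h : IsPullback k₁ k₂ (rightOf φ) Y.obj.hom) :
    gapOf φ h ≫ k₂ = leftOf φ := IsPullback.lift_snd _ _ _ _

lemma reedy_gap_fib {X Y : FibArrow T} {φ : X ⟶ Y} (hφ : ReedyFib T φ) {w : C}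
    {k₁ : w ⟶ X.obj.right} {k₂ : w ⟶ Y.obj.left}
    (h : IsPullback k₁ k₂ (rightOf φ) Y.obj.hom) : T.fib (gapOf φ h) :=
  hφ.2 _ _ _ h

lemma reedy_of_gap {X Y : FibArrow T} (φ : X ⟶ Y) (hb : T.fib (rightOf φ))
    {w₀ : C} {k₁ : w₀ ⟶ X.obj.right} {k₂ : w₀ ⟶ Y.obj.left}
    (h₀ : IsPullback k₁ k₂ (rightOf φ) Y.obj.hom) (hg : T.fib (gapOf φ h₀)) :
    ReedyFib T φ := by
  refine ⟨hb, fun w k₁' k₂' h => ?_⟩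
  suffices hh : T.fib (gapOf φ h) by exact hh
  have e : gapOf φ h = gapOf φ h₀ ≫ (h₀.isoIsPullback _ _ h).hom := by
    apply h.hom_ext
    · rw [gapOf_fst, Category.assoc, IsPullback.isoIsPullback_hom_fst, gapOf_fst]
    · rw [gapOf_snd, Category.assoc, IsPullback.isoIsPullback_hom_snd, gapOf_snd]
  rw [e]
  exact T.fib_comp _ _ hg (T.fib_iso _ inferInstance)

/-- Pointwise anodyne morphisms of arrows are anodyne for the Reedy fibrations. -/
lemma anodyne_of_pointwise {X Y : FibArrow T} (φ : X ⟶ Y)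
    (hL : Anodyne T.fib (leftOf φ)) (hR : Anodyne T.fib (rightOf φ)) :
    Anodyne (ReedyFib T) φ := by
  intro P Q ψ hψ
  constructor
  intro top bottom sq
  -- lift the bottom components
  have sqr : CommSq (rightOf top) (rightOf φ) (rightOf ψ) (rightOf bottom) :=
    ⟨by rw [← rightOf_comp, ← rightOf_comp, sq.w]⟩
  obtain ⟨⟨⟨l, hl1, hl2⟩⟩⟩ := (hR (rightOf ψ) hψ.1).sq_hasLift sqr
  -- choose a pullback of the bottom cospan of ψ and lift against the gap map
  obtain ⟨wP, k₁, k₂, hpb, hk₁⟩ := T.pb_exists (rightOf ψ) Q.obj.hom Q.property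
  have hgap : T.fib (gapOf ψ hpb) := reedy_gap_fib hψ hpb
  have bcomm : (Y.obj.hom ≫ l) ≫ rightOf ψ = leftOf bottom ≫ Q.obj.hom := by
    rw [Category.assoc, hl2, comm bottom]
  have sql : CommSq (leftOf top) (leftOf φ) (gapOf ψ hpb)
      (hpb.lift (Y.obj.hom ≫ l) (leftOf bottom) bcomm) := by
    constructor
    apply hpb.hom_ext
    · simp only [Category.assoc, gapOf_fst, IsPullback.lift_fst]
      rw [comm top, ← Category.assoc, comm φ, Category.assoc, hl1]
    · simp only [Category.assoc, gapOf_snd, IsPullback.lift_snd]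
      rw [← leftOf_comp, sq.w, leftOf_comp]
  obtain ⟨⟨⟨m, hm1, hm2⟩⟩⟩ := (hL (gapOf ψ hpb) hgap).sq_hasLift sql
  refine CommSq.HasLift.mk' ⟨homMk m l ?_, ?_, ?_⟩
  · rw [show P.obj.hom = gapOf ψ hpb ≫ k₁ from (gapOf_fst ψ hpb).symm,
      ← Category.assoc, hm2, IsPullback.lift_fst]
  · apply FibArrow.hom_ext' <;> simp [hm1, hl1]
  · apply FibArrow.hom_ext' <;> simp [hl2]
    rw [show leftOf ψ = gapOf ψ hpb ≫ k₂ from (gapOf_snd ψ hpb).symm,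
      ← Category.assoc, hm2, IsPullback.lift_snd]

lemma rightOf_anodyne_of_anodyne {X Y : FibArrow T} (φ : X ⟶ Y)
    (h : Anodyne (ReedyFib T) φ) : Anodyne T.fib (rightOf φ) := by
  intro a b p hp
  let A : FibArrow T := ⟨Arrow.mk (𝟙 a), T.fib_iso (𝟙 a) inferInstance⟩
  let B : FibArrow T := ⟨Arrow.mk (𝟙 b), T.fib_iso (𝟙 b) inferInstance⟩
  let ψ : A ⟶ B := homMk p p (by simp [A, B])
  have h₀ : IsPullback (𝟙 a) (rightOf ψ) (rightOf ψ) B.obj.hom := IsPullback.of_id_fst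
  have hψ : ReedyFib T ψ := by
    refine reedy_of_gap ψ (by simpa [ψ] using hp) h₀ ?_
    have e : gapOf ψ h₀ = 𝟙 a := by simpa [A] using gapOf_fst ψ h₀
    rw [e]; exact T.fib_iso (𝟙 a) inferInstance
  constructor
  intro u v sq
  have sq' : CommSq (homMk (X.obj.hom ≫ u) u (by simp [A]) : X ⟶ A) φ ψ
      (homMk (Y.obj.hom ≫ v) v (by simp [B]) : Y ⟶ B) := by
    constructor
    apply FibArrow.hom_ext'
    · show (X.obj.hom ≫ u) ≫ p = leftOf φ ≫ Y.obj.hom ≫ v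
      rw [← Category.assoc, comm φ, Category.assoc, Category.assoc, sq.w]
    · exact sq.w
  obtain ⟨⟨⟨L, hL1, hL2⟩⟩⟩ := (h ψ hψ).sq_hasLift sq'
  refine CommSq.HasLift.mk' ⟨rightOf L, ?_, ?_⟩
  · have := congrArg FibArrow.rightOf hL1
    simpa using this
  · have := congrArg FibArrow.rightOf hL2
    simpa [ψ] using this

lemma leftOf_anodyne_of_anodyne {X Y : FibArrow T} (φ : X ⟶ Y)
    (h : Anodyne (ReedyFib T) φ) : Anodyne T.fib (leftOf φ) := by
  intro a b p hp
  let A : FibArrow T := ⟨Arrow.mk (T.isTerm.from a), T.fib_term a⟩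
  let B : FibArrow T := ⟨Arrow.mk (T.isTerm.from b), T.fib_term b⟩
  let ψ : A ⟶ B := homMk p (𝟙 T.term) (T.isTerm.hom_ext _ _)
  haveI : IsIso (rightOf ψ) := by exact inferInstanceAs (IsIso (𝟙 T.term))
  have h₀ : IsPullback (T.isTerm.from b) (𝟙 b) (rightOf ψ) B.obj.hom :=
    IsPullback.of_vert_isIso ⟨T.isTerm.hom_ext _ _⟩
  have hψ : ReedyFib T ψ := by
    refine reedy_of_gap ψ (T.fib_iso _ ‹_›) h₀ ?_
    have e : gapOf ψ h₀ = p := by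
      have := gapOf_snd ψ h₀
      simpa [ψ] using this
    rw [e]; exact hp
  constructor
  intro u v sq
  have sq' : CommSq (homMk u (T.isTerm.from _) (T.isTerm.hom_ext _ _) : X ⟶ A) φ ψ
      (homMk v (T.isTerm.from _) (T.isTerm.hom_ext _ _) : Y ⟶ B) := by
    constructor
    apply FibArrow.hom_ext'
    · exact sq.w
    · exact T.isTerm.hom_ext _ _
  obtain ⟨⟨⟨L, hL1, hL2⟩⟩⟩ := (h ψ hψ).sq_hasLift sq'
  refine CommSq.HasLift.mk' ⟨leftOf L, ?_, ?_⟩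
  · have := congrArg FibArrow.leftOf hL1
    simpa using this
  · have := congrArg FibArrow.leftOf hL2
    simpa [ψ] using this

lemma reedy_iso {X Y : FibArrow T} (φ : X ⟶ Y) (hφ : IsIso φ) : ReedyFib T φ := by
  haveI := hφ
  haveI hL : IsIso (leftOf φ) := isIso_leftOf φ
  haveI hRiso : IsIso (rightOf φ) := isIso_rightOf φ
  obtain ⟨w, k₁, k₂, h₀, hk₁⟩ := T.pb_exists (rightOf φ) Y.obj.hom Y.property
  haveI : IsIso k₂ := isIso_snd_of_pb h₀ hRiso
  refine reedy_of_gap φ (T.fib_iso _ hRiso) h₀ ?_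
  have e : gapOf φ h₀ = leftOf φ ≫ inv k₂ := by
    rw [IsIso.eq_comp_inv]
    exact gapOf_snd φ h₀
  rw [e]
  exact T.fib_comp _ _ (T.fib_iso _ hL) (T.fib_iso _ inferInstance)

lemma reedy_comp {X Y Z : FibArrow T} (φ : X ⟶ Y) (ψ : Y ⟶ Z)
    (hφ : ReedyFib T φ) (hψ : ReedyFib T ψ) : ReedyFib T (φ ≫ ψ) := by
  obtain ⟨w', k₁, k₂, hw', hk₁⟩ := T.pb_exists (rightOf ψ) Z.obj.hom Z.property
  have hgψ : T.fib (gapOf ψ hw') := reedy_gap_fib hψ hw'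
  obtain ⟨v, q₁, q₂, hv, hq₁⟩ := T.pb_exists (rightOf φ) Y.obj.hom Y.property
  have hgφ : T.fib (gapOf φ hv) := reedy_gap_fib hφ hv
  obtain ⟨w, m₁, m₂, hm, hm₁⟩ := T.pb_exists (rightOf φ) k₁ hk₁
  have H : IsPullback m₁ (m₂ ≫ k₂) (rightOf (φ ≫ ψ)) Z.obj.hom := by
    rw [rightOf_comp]
    exact (hm.flip.paste_horiz hw'.flip).flip
  refine reedy_of_gap _ (by rw [rightOf_comp]; exact T.fib_comp _ _ hφ.1 hψ.1) H ?_
  have rcomm : q₁ ≫ rightOf φ = (q₂ ≫ gapOf ψ hw') ≫ k₁ := by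
    rw [Category.assoc, gapOf_fst]; exact hv.w
  have hr1 : hm.lift q₁ (q₂ ≫ gapOf ψ hw') rcomm ≫ m₁ = q₁ := hm.lift_fst _ _ _
  have hr2 : hm.lift q₁ (q₂ ≫ gapOf ψ hw') rcomm ≫ m₂ = q₂ ≫ gapOf ψ hw' :=
    hm.lift_snd _ _ _
  have s : IsPullback (hm.lift q₁ (q₂ ≫ gapOf ψ hw') rcomm ≫ m₁) q₂ (rightOf φ)
      (gapOf ψ hw' ≫ k₁) := by
    rw [hr1, gapOf_fst]; exact hv
  have hpbr : IsPullback (hm.lift q₁ (q₂ ≫ gapOf ψ hw') rcomm) q₂ m₂ (gapOf ψ hw') :=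
    IsPullback.of_right s hr2 hm
  have hrfib : T.fib (hm.lift q₁ (q₂ ≫ gapOf ψ hw') rcomm) :=
    T.fib_base_change _ q₂ m₂ (gapOf ψ hw') hpbr hgψ
  have e : gapOf (φ ≫ ψ) H = gapOf φ hv ≫ hm.lift q₁ (q₂ ≫ gapOf ψ hw') rcomm := by
    apply H.hom_ext
    · rw [gapOf_fst, Category.assoc, hr1, gapOf_fst]
    · simp only [gapOf_snd, leftOf_comp, Category.assoc, reassoc_of% hr2]
      rw [← Category.assoc, gapOf_snd]
  rw [e]
  exact T.fib_comp _ _ hgφ hrfib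

def termObj (T : TribeStruct C) : FibArrow T :=
  ⟨Arrow.mk (𝟙 T.term), T.fib_iso (𝟙 T.term) inferInstance⟩

def toTerm (X : FibArrow T) : X ⟶ termObj T :=
  homMk (T.isTerm.from _) (T.isTerm.from _) (T.isTerm.hom_ext _ _)

noncomputable def termIsTerm (T : TribeStruct C) : IsTerminal (termObj T) :=
  IsTerminal.ofUniqueHom (fun X => toTerm X)
    (fun _ m => FibArrow.hom_ext' (T.isTerm.hom_ext _ _) (T.isTerm.hom_ext _ _))

lemma reedy_toTerm {X : FibArrow T} (φ : X ⟶ termObj T) : ReedyFib T φ := by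
  have hb : T.fib (rightOf φ) := by
    have e : rightOf φ = T.isTerm.from _ := T.isTerm.hom_ext _ _
    rw [e]; exact T.fib_term _
  have h₀ : IsPullback (𝟙 X.obj.right) (rightOf φ) (rightOf φ) (termObj T).obj.hom :=
    IsPullback.of_id_fst
  refine reedy_of_gap φ hb h₀ ?_
  have e : gapOf φ h₀ = X.obj.hom := by simpa using gapOf_fst φ h₀
  rw [e]; exact X.property

lemma reedy_left_fib {Y Z : FibArrow T} {g : Y ⟶ Z} (hg : ReedyFib T g) :
    T.fib (leftOf g) := by
  obtain ⟨w', k₁, k₂, hw', hk₁⟩ := T.pb_exists (rightOf g) Z.obj.hom Z.property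
  have hgg : T.fib (gapOf g hw') := reedy_gap_fib hg hw'
  have hk₂ : T.fib k₂ := T.fib_base_change k₂ k₁ Z.obj.hom (rightOf g) hw'.flip hg.1
  have e : leftOf g = gapOf g hw' ≫ k₂ := (gapOf_snd g hw').symm
  rw [e]; exact T.fib_comp _ _ hgg hk₂

lemma reedy_pb {X Y Z : FibArrow T} (f : X ⟶ Z) (g : Y ⟶ Z) (hg : ReedyFib T g) :
    ∃ (W : FibArrow T) (p₁ : W ⟶ X) (p₂ : W ⟶ Y) (_ : IsPullback p₁ p₂ f g),
      ReedyFib T p₁ ∧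
      IsPullback (leftOf p₁) (leftOf p₂) (leftOf f) (leftOf g) ∧
      IsPullback (rightOf p₁) (rightOf p₂) (rightOf f) (rightOf g) := by
  obtain ⟨w', k₁, k₂, hw', hk₁⟩ := T.pb_exists (rightOf g) Z.obj.hom Z.property
  have hgg : T.fib (gapOf g hw') := reedy_gap_fib hg hw'
  have hg₁ : T.fib (leftOf g) := reedy_left_fib hg
  obtain ⟨Wr, r₁, r₂, hr, hr₁⟩ := T.pb_exists (rightOf f) (rightOf g) hg.1
  obtain ⟨Wl, l₁, l₂, hl, hl₁⟩ := T.pb_exists (leftOf f) (leftOf g) hg₁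
  have wcomm : (l₁ ≫ X.obj.hom) ≫ rightOf f = (l₂ ≫ Y.obj.hom) ≫ rightOf g := by
    rw [Category.assoc, ← comm f, Category.assoc, ← comm g, ← Category.assoc, hl.w,
      Category.assoc]
  set whom := hr.lift (l₁ ≫ X.obj.hom) (l₂ ≫ Y.obj.hom) wcomm with hwhomdef
  have hwh1 : whom ≫ r₁ = l₁ ≫ X.obj.hom := hr.lift_fst _ _ _
  have hwh2 : whom ≫ r₂ = l₂ ≫ Y.obj.hom := hr.lift_snd _ _ _
  obtain ⟨v, v₁, v₂, hv, hv₁⟩ := T.pb_exists r₁ X.obj.hom X.property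
  set n := hv.lift whom l₁ hwh1 with hndef
  have hn1 : n ≫ v₁ = whom := hv.lift_fst _ _ _
  have hn2 : n ≫ v₂ = l₁ := hv.lift_snd _ _ _
  have tcomm : (v₁ ≫ r₂) ≫ rightOf g = (v₂ ≫ leftOf f) ≫ Z.obj.hom := by
    rw [Category.assoc, Category.assoc, ← hr.w, comm f, ← Category.assoc, ← Category.assoc,
      hv.w]
  set t := hw'.lift (v₁ ≫ r₂) (v₂ ≫ leftOf f) tcomm with htdef
  have ht1 : t ≫ k₁ = v₁ ≫ r₂ := hw'.lift_fst _ _ _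
  have ht2 : t ≫ k₂ = v₂ ≫ leftOf f := hw'.lift_snd _ _ _
  have s0 : IsPullback (v₁ ≫ r₂) v₂ (rightOf g) (X.obj.hom ≫ rightOf f) :=
    hv.paste_horiz hr.flip
  have s0' : IsPullback (t ≫ k₁) v₂ (rightOf g) (leftOf f ≫ Z.obj.hom) := by
    rw [ht1, comm f]; exact s0
  have tsq : IsPullback v₂ t (leftOf f) k₂ := (IsPullback.of_right s0' ht2 hw').flip
  have pcomm : n ≫ t = l₂ ≫ gapOf g hw' := by
    apply hw'.hom_ext
    · simp only [Category.assoc, ht1, gapOf_fst, reassoc_of% hn1, hwh2]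
    · simp only [Category.assoc, ht2, gapOf_snd, reassoc_of% hn2, hl.w]
  have nsq : IsPullback n l₂ t (gapOf g hw') := by
    refine IsPullback.of_right ?_ pcomm tsq
    rw [hn2, gapOf_snd]; exact hl
  have hnfib : T.fib n := T.fib_base_change n l₂ t (gapOf g hw') nsq hgg
  have hwhomfib : T.fib whom := by
    rw [← hn1]; exact T.fib_comp _ _ hnfib hv₁
  let W : FibArrow T := ⟨Arrow.mk whom, hwhomfib⟩
  let P₁ : W ⟶ X := homMk l₁ r₁ hwh1.symm
  let P₂ : W ⟶ Y := homMk l₂ r₂ hwh2.symm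
  have hcomm : P₁ ≫ f = P₂ ≫ g :=
    FibArrow.hom_ext' (by simpa [P₁, P₂] using hl.w) (by simpa [P₁, P₂] using hr.w)
  have ptcommL : ∀ s : PullbackCone f g,
      leftOf s.fst ≫ leftOf f = leftOf s.snd ≫ leftOf g := fun s => by
    rw [← leftOf_comp, ← leftOf_comp, s.condition]
  have ptcommR : ∀ s : PullbackCone f g,
      rightOf s.fst ≫ rightOf f = rightOf s.snd ≫ rightOf g := fun s => by
    rw [← rightOf_comp, ← rightOf_comp, s.condition]
  have liftw : ∀ s : PullbackCone f g,
      hl.lift (leftOf s.fst) (leftOf s.snd) (ptcommL s) ≫ whom =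
        s.pt.obj.hom ≫ hr.lift (rightOf s.fst) (rightOf s.snd) (ptcommR s) := fun s => by
    apply hr.hom_ext
    · simp only [Category.assoc, hwh1, IsPullback.lift_fst, IsPullback.lift_fst_assoc]
      exact comm s.fst
    · simp only [Category.assoc, hwh2, IsPullback.lift_snd, IsPullback.lift_snd_assoc]
      exact comm s.snd
  have hbig : IsPullback P₁ P₂ f g := by
    refine IsPullback.of_isLimit (PullbackCone.IsLimit.mk hcomm
      (fun s => homMk (hl.lift (leftOf s.fst) (leftOf s.snd) (ptcommL s))
        (hr.lift (rightOf s.fst) (rightOf s.snd) (ptcommR s)) (liftw s)) ?_ ?_ ?_)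
    · intro s
      apply FibArrow.hom_ext' <;> simp [P₁]
    · intro s
      apply FibArrow.hom_ext' <;> simp [P₂]
    · intro s m hm1 hm2
      have e1 := congrArg FibArrow.leftOf hm1
      have e2 := congrArg FibArrow.leftOf hm2
      have e3 := congrArg FibArrow.rightOf hm1
      have e4 := congrArg FibArrow.rightOf hm2
      apply FibArrow.hom_ext'
      · apply hl.hom_ext
        · simp only [leftOf_homMk, IsPullback.lift_fst]; exact e1
        · simp only [leftOf_homMk, IsPullback.lift_snd]; exact e2
      · apply hr.hom_ext
        · simp only [rightOf_homMk, IsPullback.lift_fst]; exact e3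
        · simp only [rightOf_homMk, IsPullback.lift_snd]; exact e4
  have h₀ : IsPullback v₁ v₂ (rightOf P₁) X.obj.hom := hv
  have hreedy : ReedyFib T P₁ := by
    refine reedy_of_gap P₁ hr₁ h₀ ?_
    have e : gapOf P₁ h₀ = n := by
      apply hv.hom_ext
      · rw [gapOf_fst, hn1]; rfl
      · rw [gapOf_snd, hn2]; rfl
    rw [e]; exact hnfib
  exact ⟨W, P₁, P₂, hbig, hreedy, hl, hr⟩

lemma reedy_base_change {P X Y Z : FibArrow T} (p₁ : P ⟶ X) (p₂ : P ⟶ Y)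
    (f : X ⟶ Z) (g : Y ⟶ Z) (h : IsPullback p₁ p₂ f g) (hg : ReedyFib T g) :
    ReedyFib T p₁ := by
  obtain ⟨W', q₁, q₂, h', hq₁, _, _⟩ := reedy_pb f g hg
  have e : p₁ = (h.isoIsPullback _ _ h').hom ≫ q₁ := by simp
  rw [e]
  exact reedy_comp _ _ (reedy_iso _ inferInstance) hq₁

lemma pb_components {P X Y Z : FibArrow T} (p₁ : P ⟶ X) (p₂ : P ⟶ Y)
    (f : X ⟶ Z) (g : Y ⟶ Z) (h : IsPullback p₁ p₂ f g) (hg : ReedyFib T g) :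
    IsPullback (leftOf p₁) (leftOf p₂) (leftOf f) (leftOf g) ∧
      IsPullback (rightOf p₁) (rightOf p₂) (rightOf f) (rightOf g) := by
  obtain ⟨W', q₁, q₂, h', _, hL, hR⟩ := reedy_pb f g hg
  have e1 : p₁ = (h.isoIsPullback _ _ h').hom ≫ q₁ := by simp
  have e2 : p₂ = (h.isoIsPullback _ _ h').hom ≫ q₂ := by simp
  constructor
  · haveI : IsIso (leftOf (h.isoIsPullback _ _ h').hom) := isIso_leftOf _
    have hres := pb_iso_comp hL (leftOf (h.isoIsPullback _ _ h').hom)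
    rw [← leftOf_comp, ← leftOf_comp, ← e1, ← e2] at hres
    exact hres
  · haveI : IsIso (rightOf (h.isoIsPullback _ _ h').hom) := isIso_rightOf _
    have hres := pb_iso_comp hR (rightOf (h.isoIsPullback _ _ h').hom)
    rw [← rightOf_comp, ← rightOf_comp, ← e1, ← e2] at hres
    exact hres

lemma anodyne_iso_comp {x y z : C} (e : x ⟶ y) (i : y ⟶ z) [IsIso e]
    (hi : Anodyne T.fib i) : Anodyne T.fib (e ≫ i) := by
  intro a b p hp
  haveI := hi p hp
  infer_instance

lemma reedy_anodyne_base_change {P X Y Z : FibArrow T} (p₁ : P ⟶ X) (p₂ : P ⟶ Y)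
    (f : X ⟶ Z) (g : Y ⟶ Z) (h : IsPullback p₁ p₂ f g) (hg : ReedyFib T g)
    (hf : Anodyne (ReedyFib T) f) : Anodyne (ReedyFib T) p₂ := by
  obtain ⟨hL, hR⟩ := pb_components p₁ p₂ f g h hg
  have hfL : Anodyne T.fib (leftOf f) := leftOf_anodyne_of_anodyne f hf
  have hfR : Anodyne T.fib (rightOf f) := rightOf_anodyne_of_anodyne f hf
  have h1 : Anodyne T.fib (leftOf p₂) :=
    T.anodyne_base_change _ _ _ _ hL (reedy_left_fib hg) hfL
  have h2 : Anodyne T.fib (rightOf p₂) :=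
    T.anodyne_base_change _ _ _ _ hR hg.1 hfR
  intro a b p hp
  exact anodyne_of_pointwise p₂ h1 h2 p hp

lemma reedy_fact {X Y : FibArrow T} (φ : X ⟶ Y) :
    ∃ (M : FibArrow T) (ι : X ⟶ M) (π : M ⟶ Y),
      Anodyne (ReedyFib T) ι ∧ ReedyFib T π ∧ ι ≫ π = φ := by
  obtain ⟨c, i₂, p₂, hi₂, hp₂, hfac₂⟩ := T.fact (rightOf φ)
  obtain ⟨Pb, m₁, m₂, hP, hm₁⟩ := T.pb_exists p₂ Y.obj.hom Y.property
  have ucomm : (X.obj.hom ≫ i₂) ≫ p₂ = leftOf φ ≫ Y.obj.hom := by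
    rw [Category.assoc, hfac₂, comm φ]
  obtain ⟨L, i₁, q, hi₁, hq, hfac₁⟩ := T.fact (hP.lift (X.obj.hom ≫ i₂) (leftOf φ) ucomm)
  have hmid : T.fib (q ≫ m₁) := T.fib_comp _ _ hq hm₁
  let M : FibArrow T := ⟨Arrow.mk (q ≫ m₁), hmid⟩
  have wι : i₁ ≫ (q ≫ m₁) = X.obj.hom ≫ i₂ := by
    rw [← Category.assoc, hfac₁, IsPullback.lift_fst]
  have wπ : (q ≫ m₂) ≫ Y.obj.hom = (q ≫ m₁) ≫ p₂ := by
    rw [Category.assoc, Category.assoc, hP.w]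
  let ι : X ⟶ M := homMk i₁ i₂ wι
  let π : M ⟶ Y := homMk (q ≫ m₂) p₂ wπ
  refine ⟨M, ι, π, ?_, ?_, ?_⟩
  · exact anodyne_of_pointwise ι hi₁ hi₂
  · have h₀ : IsPullback m₁ m₂ (rightOf π) Y.obj.hom := hP
    refine reedy_of_gap π hp₂ h₀ ?_
    have e : gapOf π h₀ = q := by
      apply hP.hom_ext
      · rw [gapOf_fst]; rfl
      · rw [gapOf_snd]; rfl
    rw [e]; exact hq
  · apply FibArrow.hom_ext'
    · show i₁ ≫ q ≫ m₂ = leftOf φ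
      rw [← Category.assoc, hfac₁, IsPullback.lift_snd]
    · exact hfac₂

end Aux

/-- `T⁽¹⁾`, the full subcategory of the arrow category spanned by the
fibrations, equipped with the Reedy fibrations, is a tribe whose anodyne maps are
exactly the pointwise anodyne morphisms of arrows. -/
theorem fibArrow_tribe_and_anodyne_pointwise (T : TribeStruct C) :
    ∃ S : TribeStruct (FibArrow T),
      S.fib = ReedyFib T ∧
      ∀ {X Y : FibArrow T} (φ : X ⟶ Y),
        Anodyne S.fib φ ↔
          (Anodyne T.fib (FibArrow.leftOf φ) ∧ Anodyne T.fib (FibArrow.rightOf φ)) := by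
  refine ⟨{
      fib := ReedyFib T
      fib_comp := fun f g hf hg => reedy_comp f g hf hg
      fib_iso := fun f hf => reedy_iso f hf
      term := termObj T
      isTerm := termIsTerm T
      fib_term := fun X => reedy_toTerm _
      pb_exists := fun f g hg => by
        obtain ⟨W, p₁, p₂, h, hp₁, _, _⟩ := reedy_pb f g hg
        exact ⟨W, p₁, p₂, h, hp₁⟩
      fib_base_change := fun p₁ p₂ f g h hg => reedy_base_change p₁ p₂ f g h hg
      fact := fun φ => reedy_fact φ
      anodyne_base_change := fun p₁ p₂ f g h hg hf =>
        reedy_anodyne_base_change p₁ p₂ f g h hg hf }, rfl, ?_⟩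
  intro X Y φ
  constructor
  · intro h
    exact ⟨leftOf_anodyne_of_anodyne φ h, rightOf_anodyne_of_anodyne φ h⟩
  · rintro ⟨h1, h2⟩
    intro P Q ψ hψ
    exact anodyne_of_pointwise φ h1 h2 ψ hψ


end TribePaper
end

section
/- A free category on a graph, regarded as a simplicially enriched category with discrete hom-spaces, is cofibrant in the Bergner model structure on simplicial categories; more precisely, it can be built as a (transfinite) cell complex from the two generating cofibrations ∅ → [0] and [0] ⊔ [0] → [1], where [0] is the terminal simplicial category and [1] the discrete arrow category. -/
set_option autoImplicit false

open CategoryTheory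

namespace Stmt18

/-- The generating cofibration `∅ ⟶ [0]` of the Bergner model structure
(restricted to categories with discrete hom-spaces, i.e. to `Cat`). -/
def gen₀ : Cat.of (Discrete PEmpty) ⟶ Cat.of (Discrete PUnit) :=
  (Functor.empty _).toCatHom

/-- The generating cofibration `[0] ⊔ [0] ⟶ [1]`: the inclusion of the two endpoints
into the arrow category. -/
def gen₁ : Cat.of (Discrete Bool) ⟶ Cat.of (Fin 2) :=
  (Discrete.functor (fun b => (cond b 1 0 : Fin 2))).toCatHom

/-- The free category on a graph (quiver), regarded as a simplicial
category with discrete hom-spaces, is cofibrant in the Bergner model structure: the map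
from the initial (empty) category to it lies in the left saturation of the two
generating cofibrations `∅ ⟶ [0]` and `[0] ⊔ [0] ⟶ [1]`, i.e. it has the left lifting
property against every functor having the right lifting property against both. -/
theorem free_category_cofibrant (V : Type) [Quiver.{0} V] :
    ∀ {X Y : Cat.{0, 0}} (p : X ⟶ Y),
      HasLiftingProperty gen₀ p → HasLiftingProperty gen₁ p →
      HasLiftingProperty
        (show Cat.of (Discrete PEmpty) ⟶ Cat.of (Paths V) from (Functor.empty (Paths V)).toCatHom) p := by
  intro X Y p h0 h1
  -- Object lifting from `gen₀`
  have hobj : ∀ y : Y, ∃ x : X, p.toFunctor.obj x = y := by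
    intro y
    have sq : CommSq (Functor.empty X).toCatHom gen₀ p ((Functor.const _).obj y).toCatHom :=
      ⟨Cat.ext (Functor.empty_ext' _ _)⟩
    obtain ⟨⟨⟨l, hl₁, hl₂⟩⟩⟩ := h0.sq_hasLift sq
    exact ⟨l.toFunctor.obj ⟨⟨⟩⟩, Functor.congr_obj (congrArg Cat.Hom.toFunctor hl₂) ⟨⟨⟩⟩⟩
  -- Morphism lifting from `gen₁`
  have hmap : ∀ (x₀ x₁ : X) (g : p.toFunctor.obj x₀ ⟶ p.toFunctor.obj x₁), ∃ f : x₀ ⟶ x₁, p.toFunctor.map f = g := by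
    intro x₀ x₁ g
    let top : Cat.of (Discrete Bool) ⟶ X := (Discrete.functor (fun b => cond b x₁ x₀)).toCatHom
    let bot : Cat.of (Fin 2) ⟶ Y := (ComposableArrows.mk₁ g).toCatHom
    have w : top ≫ p = gen₁ ≫ bot := by
      apply Cat.ext
      show (Discrete.functor (fun b => cond b x₁ x₀) ⋙ (p.toFunctor : ↑X ⥤ ↑Y) : Discrete Bool ⥤ ↑Y)
        = Discrete.functor (fun b => (cond b 1 0 : Fin 2)) ⋙ (ComposableArrows.mk₁ g : Fin 2 ⥤ ↑Y)
      fapply CategoryTheory.Functor.ext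
      case h_obj =>
        rintro ⟨b⟩
        cases b <;> rfl
      case h_map =>
        rintro ⟨b⟩ ⟨b'⟩ f
        obtain rfl : b = b' := Discrete.eq_of_hom f
        obtain rfl : f = 𝟙 _ := Subsingleton.elim _ _
        simp
    have sq : CommSq top gen₁ p bot := ⟨w⟩
    obtain ⟨⟨⟨l, hl₁, hl₂⟩⟩⟩ := h1.sq_hasLift sq
    have e0 : l.toFunctor.obj (0 : Fin 2) = x₀ := Functor.congr_obj (congrArg Cat.Hom.toFunctor hl₁) ⟨false⟩
    have e1 : l.toFunctor.obj (1 : Fin 2) = x₁ := Functor.congr_obj (congrArg Cat.Hom.toFunctor hl₁) ⟨true⟩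
    let φ : (0 : Fin 2) ⟶ 1 := homOfLE (by decide)
    refine ⟨eqToHom e0.symm ≫ l.toFunctor.map φ ≫ eqToHom e1, ?_⟩
    have hm : p.toFunctor.map (l.toFunctor.map φ) = eqToHom (Functor.congr_obj (congrArg Cat.Hom.toFunctor hl₂) (0 : Fin 2))
        ≫ g ≫ eqToHom (Functor.congr_obj (congrArg Cat.Hom.toFunctor hl₂) (1 : Fin 2)).symm :=
      Functor.congr_hom (congrArg Cat.Hom.toFunctor hl₂) φ
    simp only [Functor.map_comp, eqToHom_map, hm]
    have key : ∀ {C : Type} [Category.{0} C] {a a' b c : C} (h0 : a = a') (h1 : a' = a) (g : a ⟶ b)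
        (h2 : b = c) (h3 : c = b), eqToHom h0 ≫ (eqToHom h1 ≫ g ≫ eqToHom h2) ≫ eqToHom h3 = g := by
      intros; subst_vars; simp
    exact key (C := ↑Y) _ _ g _ _
  -- build the lift on paths from vertex and edge lifts
  constructor
  intro f g sq
  constructor
  constructor
  let o : V → ↑X := fun v => (hobj (g.toFunctor.obj ((Paths.of V).obj v))).choose
  let m : ∀ {a b : V}, (a ⟶ b) → (o a ⟶ o b) := fun {a b} e => (hmap _ _
        (eqToHom (hobj (g.toFunctor.obj ((Paths.of V).obj a))).choose_spec ≫
          g.toFunctor.map ((Paths.of V).map e) ≫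
          eqToHom (hobj (g.toFunctor.obj ((Paths.of V).obj b))).choose_spec.symm)).choose
  let L : Paths V ⥤ ↑X := Paths.lift { obj := o, map := m }
  have hfac : (L.toCatHom : Cat.of (Paths V) ⟶ X) ≫ p = g := ?_
  exact ⟨L.toCatHom, Cat.ext (Functor.empty_ext' (C := ↑X) _ _), hfac⟩
  apply Cat.ext
  show (L ⋙ (p.toFunctor : ↑X ⥤ ↑Y) : Paths V ⥤ ↑Y) = (g.toFunctor : Paths V ⥤ ↑Y)
  fapply Paths.ext_functor
  · funext v
    exact (hobj (g.toFunctor.obj ((Paths.of V).obj v))).choose_spec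
  · intro a b e
    show p.toFunctor.map ((Paths.lift _).map e.toPath) = _
    rw [Paths.lift_toPath]
    dsimp only
    exact (hmap _ _ _).choose_spec

end Stmt18
end
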